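/- arXiv:2511.11254 — 2 statements merged into one kernel-verified Lean document; each statement's English description precedes it below -/
import Mathlib

section
/- Let G be a finite group, F a group, (F, G, ◁, ▷) a matched pair, σ, τ cocycle data, H = k^G τ#_σ kF, and let R : H × H → k be a bilinear form. Then (H, R) is coquasitriangular if and only if for all g, h, l ∈ G and f, f', f'' ∈ F the following hold: (CQT0) Σ_{x∈G} R(p_x#1, p_g#f) = Σ_{x∈G} R(p_g#f, p_x#1) = δ_{g,1}; (CQT1) δ_{h◁f', l} σ(h; f', f'') R(p_g#f, p_h#(f'f'')) = Σ_{x∈G} τ(g x⁻¹, x; f) R(p_{g x⁻¹}#(x▷f), p_l#f'') R(p_x#f, p_h#f'); (CQT2) δ_{g◁f, h} σ(g; f, f') R(p_g#(ff'), p_l#f'') = Σ_{x∈G} τ(l x⁻¹, x; f'') R(p_g#f, p_{l x⁻¹}#(x▷f'')) R(p_h#f', p_x#f''); (CQT3) as an identity in the group algebra kF: τ(g l⁻¹, l; f) τ(h(l◁f)⁻¹, l◁f; f') R(p_{g l⁻¹}#(l▷f), p_{h(l◁f)⁻¹}#((l◁f)▷f')) σ(l; f, f') · (f f') = τ((h◁f')((l⁻¹h)◁f')⁻¹,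 ((l⁻¹h)◁f')(h◁f')⁻¹ g; f) τ(l, l⁻¹h; f') R(p_{((l⁻¹h)◁f')(h◁f')⁻¹ g}#f, p_{l⁻¹h}#f') σ(l; (l⁻¹h)▷f', (((l⁻¹h)◁f')(h◁f')⁻¹ g)▷f) · (((l⁻¹h)▷f')((((l⁻¹h)◁f')(h◁f')⁻¹ g)▷f)). -/
/-- A matched pair of groups `(F, G, ◁, ▷)`: `rtr g f = g ▷ f` is an action of the
group `G` on the set `F`, and `ltl g f = g ◁ f` is an action of the group `F` on the
set `G`, satisfying the matched pair compatibility conditions. -/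
structure MatchedPair (F G : Type*) [Group F] [Group G] where
  rtr : G → F → F
  ltl : G → F → G
  one_rtr : ∀ f, rtr 1 f = f
  mul_rtr : ∀ g g' f, rtr (g * g') f = rtr g (rtr g' f)
  ltl_one : ∀ g, ltl g 1 = g
  ltl_mul : ∀ g f f', ltl g (f * f') = ltl (ltl g f) f'
  rtr_mul : ∀ g f f', rtr g (f * f') = rtr g f * rtr (ltl g f) f'
  mul_ltl : ∀ g g' f, ltl (g * g') f = ltl g (rtr g' f) * ltl g' f

/-- Cocycle data `(σ, τ)` for the abelian extension `k^G τ#_σ kF`. -/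
structure CocycleData (k F G : Type*) [Field k] [Group F] [Group G]
    (mp : MatchedPair F G) where
  sig : G → F → F → kˣ
  tau : G → G → F → kˣ
  sig_one_left : ∀ g f, sig g 1 f = 1
  sig_one_right : ∀ g f, sig g f 1 = 1
  one_sig : ∀ f f', sig 1 f f' = 1
  sig_cocycle : ∀ g f f' f'',
    sig (mp.ltl g f) f' f'' * sig g f (f' * f'') = sig g f f' * sig g (f * f') f''
  one_tau : ∀ g f, tau 1 g f = 1
  tau_one : ∀ g f, tau g 1 f = 1
  tau_one_right : ∀ g g', tau g g' 1 = 1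
  tau_cocycle : ∀ g g' g'' f,
    tau g g' (mp.rtr g'' f) * tau (g * g') g'' f = tau g (g' * g'') f * tau g' g'' f
  compat : ∀ g g' f f',
    sig (g * g') f f' * tau g g' (f * f')
      = sig g (mp.rtr g' f) (mp.rtr (mp.ltl g' f) f') * sig g' f f' * tau g g' f
        * tau (mp.ltl g (mp.rtr g' f)) (mp.ltl g' f) f'

/-- The product `(p_g # f)(p_{g'} # f') = δ_{g ◁ f, g'} σ(g; f, f') p_g # (f f')` of two
basis elements of `H = k^G τ#_σ kF`, as an element of `H` (realized as `(G × F) →₀ k`). -/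
noncomputable def mulB {k F G : Type*} [Field k] [Group F] [Group G] [DecidableEq G]
    (mp : MatchedPair F G) (cd : CocycleData k F G mp) (i j : G × F) : (G × F) →₀ k :=
  if mp.ltl i.1 i.2 = j.1 then
    Finsupp.single (i.1, i.2 * j.2) ((cd.sig i.1 i.2 j.2 : kˣ) : k)
  else 0

section Helpers

variable {k F G : Type*} [Field k] [Group F] [Group G]
variable (mp : MatchedPair F G)

lemma mp_one_ltl (f : F) : mp.ltl 1 f = 1 := by
  have h := mp.mul_ltl 1 1 f
  rw [one_mul, mp.one_rtr] at h
  exact (left_eq_mul.mp h)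

lemma mp_rtr_one (g : G) : mp.rtr g 1 = 1 := by
  have h := mp.rtr_mul g 1 1
  rw [one_mul, mp.ltl_one] at h
  exact (left_eq_mul.mp h)

lemma mp_ltl_ltl_inv (g : G) (f : F) : mp.ltl (mp.ltl g f) f⁻¹ = g := by
  have h := mp.ltl_mul g f f⁻¹
  rw [mul_inv_cancel, mp.ltl_one] at h
  exact h.symm

lemma mp_ltl_eq_one_iff (g : G) (f : F) : mp.ltl g f = 1 ↔ g = 1 := by
  constructor
  · intro h
    have h2 := mp_ltl_ltl_inv mp g f
    rw [h, mp_one_ltl] at h2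
    exact h2.symm
  · rintro rfl; exact mp_one_ltl mp f

lemma mp_rtr_rtr_inv (g : G) (f : F) : mp.rtr g⁻¹ (mp.rtr g f) = f := by
  have h := mp.mul_rtr g⁻¹ g f
  rw [inv_mul_cancel, mp.one_rtr] at h
  exact h.symm

lemma mp_rtr_ltl_inv (g : G) (f : F) : mp.rtr (mp.ltl g f) f⁻¹ = (mp.rtr g f)⁻¹ := by
  have h := mp.rtr_mul g f f⁻¹
  rw [mul_inv_cancel, mp_rtr_one] at h
  exact eq_inv_of_mul_eq_one_right h.symm

lemma mp_ltl_inv_rtr (g : G) (f : F) : mp.ltl g⁻¹ (mp.rtr g f) = (mp.ltl g f)⁻¹ := by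
  have h := mp.mul_ltl g⁻¹ g f
  rw [inv_mul_cancel, mp_one_ltl] at h
  exact eq_inv_of_mul_eq_one_left h.symm

lemma mp_ltl_inv_ltl (g : G) (f : F) : mp.ltl (mp.ltl g f⁻¹) f = g := by
  have h := mp.ltl_mul g f⁻¹ f
  rw [inv_mul_cancel, mp.ltl_one] at h
  exact h.symm

lemma mp_antipode (a : G) (φ : F) :
    mp.ltl (mp.ltl a φ)⁻¹ (mp.rtr a φ)⁻¹ = a⁻¹ := by
  have h1 : mp.rtr (mp.ltl a φ) φ⁻¹ = (mp.rtr a φ)⁻¹ := mp_rtr_ltl_inv mp a φ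
  have h2 := mp_ltl_inv_rtr mp (mp.ltl a φ) φ⁻¹
  rw [h1, mp_ltl_ltl_inv] at h2
  exact h2

variable (cd : CocycleData k F G mp)

/-- `τ(b, b⁻¹; b ▷ f) = τ(b⁻¹, b; f)`. -/
lemma tau_flip (b : G) (f : F) : cd.tau b b⁻¹ (mp.rtr b f) = cd.tau b⁻¹ b f := by
  have h := cd.tau_cocycle b b⁻¹ b f
  rw [mul_inv_cancel, inv_mul_cancel, cd.one_tau, cd.tau_one, mul_one, one_mul] at h
  exact h

/-- `σ(g ◁ f; f⁻¹, f) = σ(g; f, f⁻¹)`. -/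
lemma sig_flip (g : G) (f : F) : cd.sig (mp.ltl g f) f⁻¹ f = cd.sig g f f⁻¹ := by
  have h := cd.sig_cocycle g f f⁻¹ f
  rw [inv_mul_cancel, mul_inv_cancel, cd.sig_one_right, cd.sig_one_left, mul_one, mul_one] at h
  exact h

/-- `τ(a, a⁻¹; a ▷ f) = τ(a⁻¹, a; f)`. -/
lemma tau_swap (a : G) (f : F) : cd.tau a a⁻¹ (mp.rtr a f) = cd.tau a⁻¹ a f :=
  tau_flip mp cd a f

/-- Key identity used for the antipode-type computation:
`σ(g ◁ f; f⁻¹, f) τ(a⁻¹, a; f) = σ(a; f, f⁻¹) τ(a, a⁻¹; a ▷ f)`. -/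
lemma antipode_coeff (a : G) (f : F) :
    cd.sig (mp.ltl a f) f⁻¹ f * cd.tau a⁻¹ a f
      = cd.sig a f f⁻¹ * cd.tau a a⁻¹ (mp.rtr a f) := by
  rw [sig_flip, tau_swap]

end Helpers

section Conv

variable {k F G : Type*} [Field k] [Group F] [Group G] [Fintype G] [DecidableEq G]
variable (mp : MatchedPair F G) (cd : CocycleData k F G mp)

/-- Convolution of bilinear forms on `H ⊗ H`, expressed on basis elements. -/
noncomputable def conv2 (A B : G → F → G → F → k) : G → F → G → F → k :=
  fun g f h f' => ∑ x : G, ∑ y : G,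
    ((cd.tau (g * x⁻¹) x f : kˣ) : k) * ((cd.tau (h * y⁻¹) y f' : kˣ) : k) *
      A (g * x⁻¹) (mp.rtr x f) (h * y⁻¹) (mp.rtr y f') * B x f y f'

/-- The unit `ε ⊗ ε` for the convolution. -/
def E2 : G → F → G → F → k :=
  fun g _ h _ => (if g = 1 then (1 : k) else 0) * (if h = 1 then (1 : k) else 0)

lemma conv2_E_left (A : G → F → G → F → k) : conv2 mp cd (E2) A = A := by
  funext g f h f'
  unfold conv2 E2
  rw [Finset.sum_eq_single g]
  · rw [Finset.sum_eq_single h]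
    · simp [cd.one_tau]
    · intro y _ hy
      have : h * y⁻¹ ≠ 1 := by simpa [mul_inv_eq_one] using hy.symm
      simp [this]
    · simp
  · intro x _ hx
    apply Finset.sum_eq_zero
    intro y _
    have : g * x⁻¹ ≠ 1 := by simpa [mul_inv_eq_one] using hx.symm
    simp [this]
  · simp

lemma conv2_E_right (A : G → F → G → F → k) : conv2 mp cd A (E2) = A := by
  funext g f h f'
  unfold conv2 E2
  rw [Finset.sum_eq_single 1]
  · rw [Finset.sum_eq_single 1]
    · simp [cd.tau_one, mp.one_rtr]
    · intro y _ hy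
      simp [hy]
    · simp
  · intro x _ hx
    apply Finset.sum_eq_zero
    intro y _
    simp [hx]
  · simp

lemma sum_swap4 {M : Type*} [AddCommMonoid M] (f : G → G → G → G → M) :
    (∑ a : G, ∑ b : G, ∑ c : G, ∑ d : G, f a b c d)
      = ∑ c : G, ∑ d : G, ∑ a : G, ∑ b : G, f a b c d := by
  calc (∑ a : G, ∑ b : G, ∑ c : G, ∑ d : G, f a b c d)
      = ∑ a : G, ∑ c : G, ∑ b : G, ∑ d : G, f a b c d :=
        Finset.sum_congr rfl (fun a _ => Finset.sum_comm)
    _ = ∑ c : G, ∑ a : G, ∑ b : G, ∑ d : G, f a b c d := Finset.sum_comm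
    _ = ∑ c : G, ∑ a : G, ∑ d : G, ∑ b : G, f a b c d :=
        Finset.sum_congr rfl (fun c _ =>
          Finset.sum_congr rfl (fun a _ => Finset.sum_comm))
    _ = ∑ c : G, ∑ d : G, ∑ a : G, ∑ b : G, f a b c d :=
        Finset.sum_congr rfl (fun c _ => Finset.sum_comm)

lemma sum_reindex_mulRight {M : Type*} [AddCommMonoid M] (x : G) (f : G → M) :
    ∑ z : G, f z = ∑ p : G, f (p * x⁻¹) :=
  (Fintype.sum_equiv (Equiv.mulRight x⁻¹) (fun p => f (p * x⁻¹)) f (fun _ => rfl)).symm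

lemma mul_rearrange {a b c d a' b' c' d' A B C : k} (h1 : c * a = a' * c')
    (h2 : d * b = b' * d') :
    a * b * (c * d * A * B) * C = a' * b' * A * (c' * d' * B * C) := by
  calc a * b * (c * d * A * B) * C = (c * a) * ((d * b) * (A * B * C)) := by ring
    _ = (a' * c') * ((b' * d') * (A * B * C)) := by rw [h1, h2]
    _ = a' * b' * A * (c' * d' * B * C) := by ring

lemma conv2_assoc (A B C : G → F → G → F → k) :
    conv2 mp cd (conv2 mp cd A B) C = conv2 mp cd A (conv2 mp cd B C) := by
  funext g f h f'
  unfold conv2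
  simp only [Finset.sum_mul, Finset.mul_sum]
  -- LHS : ∑ x ∑ y ∑ z ∑ w,  RHS : ∑ p ∑ q ∑ x ∑ y
  rw [show (∑ x : G, ∑ y : G, ∑ z : G, ∑ w : G,
      ((cd.tau (g * x⁻¹) x f : kˣ) : k) * ((cd.tau (h * y⁻¹) y f' : kˣ) : k) *
        (((cd.tau (g * x⁻¹ * z⁻¹) z (mp.rtr x f) : kˣ) : k) *
            ((cd.tau (h * y⁻¹ * w⁻¹) w (mp.rtr y f') : kˣ) : k) *
          A (g * x⁻¹ * z⁻¹) (mp.rtr z (mp.rtr x f)) (h * y⁻¹ * w⁻¹)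
            (mp.rtr w (mp.rtr y f')) *
          B z (mp.rtr x f) w (mp.rtr y f')) * C x f y f')
    = ∑ x : G, ∑ y : G, ∑ p : G, ∑ q : G,
      ((cd.tau (g * x⁻¹) x f : kˣ) : k) * ((cd.tau (h * y⁻¹) y f' : kˣ) : k) *
        (((cd.tau (g * x⁻¹ * (p * x⁻¹)⁻¹) (p * x⁻¹) (mp.rtr x f) : kˣ) : k) *
            ((cd.tau (h * y⁻¹ * (q * y⁻¹)⁻¹) (q * y⁻¹) (mp.rtr y f') : kˣ) : k) *
          A (g * x⁻¹ * (p * x⁻¹)⁻¹) (mp.rtr (p * x⁻¹) (mp.rtr x f))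
            (h * y⁻¹ * (q * y⁻¹)⁻¹) (mp.rtr (q * y⁻¹) (mp.rtr y f')) *
          B (p * x⁻¹) (mp.rtr x f) (q * y⁻¹) (mp.rtr y f')) * C x f y f' from
    Finset.sum_congr rfl (fun x _ => Finset.sum_congr rfl (fun y _ => by
      rw [sum_reindex_mulRight x]
      exact Finset.sum_congr rfl (fun p _ => sum_reindex_mulRight y _)))]
  rw [sum_swap4]
  refine Finset.sum_congr rfl fun p _ => Finset.sum_congr rfl fun q _ =>
    Finset.sum_congr rfl fun x _ => Finset.sum_congr rfl fun y _ => ?_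
  have e1 : g * x⁻¹ * (p * x⁻¹)⁻¹ = g * p⁻¹ := by group
  have e2 : h * y⁻¹ * (q * y⁻¹)⁻¹ = h * q⁻¹ := by group
  have e3 : mp.rtr (p * x⁻¹) (mp.rtr x f) = mp.rtr p f := by
    rw [← mp.mul_rtr, inv_mul_cancel_right]
  have e4 : mp.rtr (q * y⁻¹) (mp.rtr y f') = mp.rtr q f' := by
    rw [← mp.mul_rtr, inv_mul_cancel_right]
  rw [e1, e2, e3, e4]
  have t1 : ((cd.tau (g * p⁻¹) (p * x⁻¹) (mp.rtr x f) : kˣ) : k)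
        * ((cd.tau (g * x⁻¹) x f : kˣ) : k)
      = ((cd.tau (g * p⁻¹) p f : kˣ) : k) * ((cd.tau (p * x⁻¹) x f : kˣ) : k) := by
    have h0 := congrArg (Units.val) (cd.tau_cocycle (g * p⁻¹) (p * x⁻¹) x f)
    push_cast at h0
    rw [show g * p⁻¹ * (p * x⁻¹) = g * x⁻¹ by group,
      show p * x⁻¹ * x = p by group] at h0
    exact h0
  have t2 : ((cd.tau (h * q⁻¹) (q * y⁻¹) (mp.rtr y f') : kˣ) : k)
        * ((cd.tau (h * y⁻¹) y f' : kˣ) : k)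
      = ((cd.tau (h * q⁻¹) q f' : kˣ) : k) * ((cd.tau (q * y⁻¹) y f' : kˣ) : k) := by
    have h0 := congrArg (Units.val) (cd.tau_cocycle (h * q⁻¹) (q * y⁻¹) y f')
    push_cast at h0
    rw [show h * q⁻¹ * (q * y⁻¹) = h * y⁻¹ by group,
      show q * y⁻¹ * y = q by group] at h0
    exact h0
  exact mul_rearrange t1 t2

variable {mp} {cd}

lemma conv2_W_R (R : G → F → G → F → k)
    (h1 : ∀ (g h l : G) (f f' f'' : F),
      (if mp.ltl h f' = l then (1 : k) else 0) * ((cd.sig h f' f'' : kˣ) : k)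
          * R g f h (f' * f'')
        = ∑ x : G, ((cd.tau (g * x⁻¹) x f : kˣ) : k)
            * R (g * x⁻¹) (mp.rtr x f) l f'' * R x f h f') :
    conv2 mp cd (fun g f h _ => (∑ l : G, R g f l 1) * (if h = 1 then (1 : k) else 0)) R
      = R := by
  funext g f h f'
  unfold conv2
  have hx : ∀ x : G, (∑ y : G,
      ((cd.tau (g * x⁻¹) x f : kˣ) : k) * ((cd.tau (h * y⁻¹) y f' : kˣ) : k) *
        ((∑ l : G, R (g * x⁻¹) (mp.rtr x f) l 1) * (if h * y⁻¹ = 1 then (1 : k) else 0))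
        * R x f y f')
      = ∑ l : G, ((cd.tau (g * x⁻¹) x f : kˣ) : k)
          * R (g * x⁻¹) (mp.rtr x f) l 1 * R x f h f' := by
    intro x
    rw [Finset.sum_eq_single h
      (fun y _ hy => by
        have : h * y⁻¹ ≠ 1 := by simpa [mul_inv_eq_one] using hy.symm
        simp [this])
      (by simp)]
    rw [mul_inv_cancel, cd.one_tau]
    simp only [Units.val_one, if_pos rfl, if_true, mul_one, one_mul]
    rw [Finset.mul_sum, Finset.sum_mul]
  rw [Finset.sum_congr rfl (fun x _ => hx x), Finset.sum_comm]
  have key : ∀ l : G, (∑ x : G, ((cd.tau (g * x⁻¹) x f : kˣ) : k)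
      * R (g * x⁻¹) (mp.rtr x f) l 1 * R x f h f')
      = (if mp.ltl h f' = l then (1 : k) else 0) * ((cd.sig h f' 1 : kˣ) : k)
          * R g f h (f' * 1) := fun l => (h1 g h l f f' 1).symm
  rw [Finset.sum_congr rfl (fun l _ => key l)]
  simp [cd.sig_one_right, ite_mul, Finset.sum_ite_eq]

lemma conv2_R_U (R : G → F → G → F → k)
    (h2 : ∀ (g h l : G) (f f' f'' : F),
      (if mp.ltl g f = h then (1 : k) else 0) * ((cd.sig g f f' : kˣ) : k)
          * R g (f * f') l f''
        = ∑ x : G, ((cd.tau (l * x⁻¹) x f'' : kˣ) : k)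
            * R g f (l * x⁻¹) (mp.rtr x f'') * R h f' x f'') :
    conv2 mp cd R (fun g _ h f' => (if g = 1 then (1 : k) else 0) * (∑ x : G, R x 1 h f'))
      = R := by
  funext g f l f''
  unfold conv2
  rw [Finset.sum_eq_single 1
    (fun x _ hx => Finset.sum_eq_zero (fun y _ => by simp [hx]))
    (by simp)]
  · simp only [inv_one, mul_one, cd.tau_one, mp.one_rtr, Units.val_one, one_mul,
      eq_self_iff_true, if_true]
    have step : ∀ y : G, ((cd.tau (l * y⁻¹) y f'' : kˣ) : k)
          * R g f (l * y⁻¹) (mp.rtr y f'') * (∑ x : G, R x 1 y f'')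
        = ∑ x : G, ((cd.tau (l * y⁻¹) y f'' : kˣ) : k)
            * R g f (l * y⁻¹) (mp.rtr y f'') * R x 1 y f'' :=
      fun y => by rw [Finset.mul_sum]
    rw [Finset.sum_congr rfl (fun y _ => step y), Finset.sum_comm]
    have step2 : ∀ x : G, (∑ y : G, ((cd.tau (l * y⁻¹) y f'' : kˣ) : k)
          * R g f (l * y⁻¹) (mp.rtr y f'') * R x 1 y f'')
        = (if mp.ltl g f = x then (1 : k) else 0) * ((cd.sig g f 1 : kˣ) : k)
            * R g (f * 1) l f'' := fun x => (h2 g x l f 1 f'').symm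
    rw [Finset.sum_congr rfl (fun x _ => step2 x)]
    simp [cd.sig_one_right, ite_mul, Finset.sum_ite_eq]


lemma qcomm_lhs_apply (R : G → F → G → F → k) (g h l : G) (f f' w : F) :
    ((∑ x : G, ∑ y : G,
      (((cd.tau (g * x⁻¹) x f : kˣ) : k) * ((cd.tau (h * y⁻¹) y f' : kˣ) : k) *
        R (g * x⁻¹) (mp.rtr x f) (h * y⁻¹) (mp.rtr y f')) • mulB mp cd (x, f) (y, f'))) (l, w)
      = (Finsupp.single (f * f')
          (((cd.tau (g * l⁻¹) l f : kˣ) : k)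
            * ((cd.tau (h * (mp.ltl l f)⁻¹) (mp.ltl l f) f' : kˣ) : k)
            * R (g * l⁻¹) (mp.rtr l f) (h * (mp.ltl l f)⁻¹) (mp.rtr (mp.ltl l f) f')
            * ((cd.sig l f f' : kˣ) : k)) : F →₀ k) w := by
  classical
  rw [Finsupp.finset_sum_apply, Finset.sum_congr rfl
    (fun x _ => Finsupp.finset_sum_apply _ _ _)]
  rw [Finset.sum_eq_single l
    (fun x _ hx => Finset.sum_eq_zero fun y _ => by
      rw [Finsupp.smul_apply]
      unfold mulB
      split
      · rw [Finsupp.single_eq_of_ne' (fun hc => hx (congrArg Prod.fst hc))]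
        simp
      · simp)
    (by simp)]
  rw [Finset.sum_eq_single (mp.ltl l f)
    (fun y _ hy => by
      have hne : mp.ltl l f ≠ y := fun hc => hy hc.symm
      rw [Finsupp.smul_apply]
      unfold mulB
      rw [if_neg hne]
      simp)
    (by simp)]
  rw [Finsupp.smul_apply]
  unfold mulB
  rw [if_pos rfl, Finsupp.single_apply, Finsupp.single_apply]
  by_cases hw : f * f' = w
  · simp [hw, Prod.mk.injEq]
  · simp [hw, Prod.mk.injEq]

lemma qcomm_rhs_apply (R : G → F → G → F → k) (g h l : G) (f f' w : F) :
    ((∑ x : G, ∑ y : G,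
      (((cd.tau (g * x⁻¹) x f : kˣ) : k) * ((cd.tau (h * y⁻¹) y f' : kˣ) : k) *
        R x f y f') • mulB mp cd (h * y⁻¹, mp.rtr y f') (g * x⁻¹, mp.rtr x f))) (l, w)
      = (Finsupp.single
          (mp.rtr (l⁻¹ * h) f'
            * mp.rtr ((mp.ltl (h * (l⁻¹ * h)⁻¹) (mp.rtr (l⁻¹ * h) f'))⁻¹ * g) f)
          (((cd.tau (g * ((mp.ltl (h * (l⁻¹ * h)⁻¹) (mp.rtr (l⁻¹ * h) f'))⁻¹ * g)⁻¹)
                ((mp.ltl (h * (l⁻¹ * h)⁻¹) (mp.rtr (l⁻¹ * h) f'))⁻¹ * g) f : kˣ) : k)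
            * ((cd.tau (h * (l⁻¹ * h)⁻¹) (l⁻¹ * h) f' : kˣ) : k)
            * R ((mp.ltl (h * (l⁻¹ * h)⁻¹) (mp.rtr (l⁻¹ * h) f'))⁻¹ * g) f (l⁻¹ * h) f'
            * ((cd.sig (h * (l⁻¹ * h)⁻¹) (mp.rtr (l⁻¹ * h) f')
                (mp.rtr ((mp.ltl (h * (l⁻¹ * h)⁻¹) (mp.rtr (l⁻¹ * h) f'))⁻¹ * g) f) : kˣ) : k))
          : F →₀ k) w := by
  classical
  set y₀ : G := l⁻¹ * h with hy₀
  set x₀ : G := (mp.ltl (h * y₀⁻¹) (mp.rtr y₀ f'))⁻¹ * g with hx₀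
  have hyl : h * y₀⁻¹ = l := by rw [hy₀]; group
  have hgx : g * x₀⁻¹ = mp.ltl (h * y₀⁻¹) (mp.rtr y₀ f') := by rw [hx₀]; group
  rw [Finsupp.finset_sum_apply, Finset.sum_congr rfl
    (fun x _ => Finsupp.finset_sum_apply _ _ _)]
  have inner_zero : ∀ x : G, ∀ y : G, y ≠ y₀ →
      ((((cd.tau (g * x⁻¹) x f : kˣ) : k) * ((cd.tau (h * y⁻¹) y f' : kˣ) : k) *
        R x f y f') • mulB mp cd (h * y⁻¹, mp.rtr y f') (g * x⁻¹, mp.rtr x f)) (l, w) = 0 := by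
    intro x y hy
    have hne : h * y⁻¹ ≠ l := fun hc => hy (by
      have h2 : y⁻¹ = h⁻¹ * l := by rw [← hc]; group
      rw [← inv_inv y, h2, hy₀]; group)
    rw [Finsupp.smul_apply]
    unfold mulB
    split
    · rw [Finsupp.single_eq_of_ne' (fun hc => hne (congrArg Prod.fst hc))]
      simp
    · simp
  rw [Finset.sum_eq_single x₀
    (fun x _ hx => by
      rw [Finset.sum_eq_single y₀ (fun y _ hy => inner_zero x y hy) (by simp)]
      rw [Finsupp.smul_apply]
      unfold mulB
      have hne : mp.ltl (h * y₀⁻¹) (mp.rtr y₀ f') ≠ g * x⁻¹ := fun hc => hx (by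
        have h2 : x⁻¹ = g⁻¹ * mp.ltl (h * y₀⁻¹) (mp.rtr y₀ f') := by rw [hc]; group
        rw [← inv_inv x, h2, hx₀]; group)
      rw [if_neg hne]
      simp)
    (by simp)]
  rw [Finset.sum_eq_single y₀ (fun y _ hy => inner_zero x₀ y hy) (by simp)]
  rw [Finsupp.smul_apply]
  unfold mulB
  rw [if_pos hgx.symm, hyl]
  rw [Finsupp.single_apply, Finsupp.single_apply]
  by_cases hw : mp.rtr y₀ f' * mp.rtr x₀ f = w
  · simp [hw, Prod.mk.injEq]
  · simp [hw, Prod.mk.injEq]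

/-- The candidate convolution inverse `R'(a, b) = R(S(a), b)`. -/
noncomputable def Rbar (R : G → F → G → F → k) : G → F → G → F → k :=
  fun g f h f' =>
    ((((cd.sig g⁻¹ (mp.rtr g f) (mp.rtr g f)⁻¹)⁻¹ * (cd.tau g⁻¹ g f)⁻¹ : kˣ)) : k)
      * R (mp.ltl g f)⁻¹ (mp.rtr g f)⁻¹ h f'

lemma conv_inv_1 (R : G → F → G → F → k)
    (h0L : ∀ (g : G) (f : F), ∑ x : G, R x 1 g f = if g = 1 then (1 : k) else 0)
    (h2 : ∀ (g h l : G) (f f' f'' : F),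
      (if mp.ltl g f = h then (1 : k) else 0) * ((cd.sig g f f' : kˣ) : k)
          * R g (f * f') l f''
        = ∑ x : G, ((cd.tau (l * x⁻¹) x f'' : kˣ) : k)
            * R g f (l * x⁻¹) (mp.rtr x f'') * R h f' x f'')
    (g h : G) (f f' : F) :
    ∑ x : G, ∑ y : G,
      ((cd.tau (g * x⁻¹) x f : kˣ) : k) * ((cd.tau (h * y⁻¹) y f' : kˣ) : k) *
        R (g * x⁻¹) (mp.rtr x f) (h * y⁻¹) (mp.rtr y f') * Rbar (cd := cd) R x f y f'
      = (if g = 1 then (1 : k) else 0) * (if h = 1 then (1 : k) else 0) := by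
  have step : ∀ x : G, (∑ y : G,
      ((cd.tau (g * x⁻¹) x f : kˣ) : k) * ((cd.tau (h * y⁻¹) y f' : kˣ) : k) *
        R (g * x⁻¹) (mp.rtr x f) (h * y⁻¹) (mp.rtr y f') * Rbar (cd := cd) R x f y f')
      = (((((cd.sig x⁻¹ (mp.rtr x f) (mp.rtr x f)⁻¹)⁻¹ * (cd.tau x⁻¹ x f)⁻¹ : kˣ)) : k)
          * ((cd.tau (g * x⁻¹) x f : kˣ) : k))
        * ((if mp.ltl (g * x⁻¹) (mp.rtr x f) = (mp.ltl x f)⁻¹ then (1 : k) else 0)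
            * ((cd.sig (g * x⁻¹) (mp.rtr x f) (mp.rtr x f)⁻¹ : kˣ) : k)
            * R (g * x⁻¹) (mp.rtr x f * (mp.rtr x f)⁻¹) h f') := by
    intro x
    rw [show (∑ y : G,
        ((cd.tau (g * x⁻¹) x f : kˣ) : k) * ((cd.tau (h * y⁻¹) y f' : kˣ) : k) *
          R (g * x⁻¹) (mp.rtr x f) (h * y⁻¹) (mp.rtr y f') * Rbar (cd := cd) R x f y f')
      = (((((cd.sig x⁻¹ (mp.rtr x f) (mp.rtr x f)⁻¹)⁻¹ * (cd.tau x⁻¹ x f)⁻¹ : kˣ)) : k)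
          * ((cd.tau (g * x⁻¹) x f : kˣ) : k))
        * (∑ y : G, ((cd.tau (h * y⁻¹) y f' : kˣ) : k)
            * R (g * x⁻¹) (mp.rtr x f) (h * y⁻¹) (mp.rtr y f')
            * R (mp.ltl x f)⁻¹ (mp.rtr x f)⁻¹ y f') from by
      rw [Finset.mul_sum]
      exact Finset.sum_congr rfl fun y _ => by unfold Rbar; ring]
    rw [← h2 (g * x⁻¹) (mp.ltl x f)⁻¹ h (mp.rtr x f) (mp.rtr x f)⁻¹ f']
  rw [Finset.sum_congr rfl (fun x _ => step x)]
  by_cases hg : g = 1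
  · subst hg
    simp only [one_mul]
    have term : ∀ x : G, (((((cd.sig x⁻¹ (mp.rtr x f) (mp.rtr x f)⁻¹)⁻¹
            * (cd.tau x⁻¹ x f)⁻¹ : kˣ)) : k) * ((cd.tau x⁻¹ x f : kˣ) : k))
        * ((if mp.ltl x⁻¹ (mp.rtr x f) = (mp.ltl x f)⁻¹ then (1 : k) else 0)
            * ((cd.sig x⁻¹ (mp.rtr x f) (mp.rtr x f)⁻¹ : kˣ) : k)
            * R x⁻¹ (mp.rtr x f * (mp.rtr x f)⁻¹) h f')
        = R x⁻¹ 1 h f' := by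
      intro x
      rw [if_pos (mp_ltl_inv_rtr mp x f), mul_inv_cancel, one_mul]
      rw [Units.val_mul, Units.val_inv_eq_inv_val, Units.val_inv_eq_inv_val]
      field_simp
    rw [Finset.sum_congr rfl (fun x _ => term x)]
    rw [Fintype.sum_equiv (Equiv.inv G) (fun x => R x⁻¹ 1 h f') (fun z => R z 1 h f')
      (fun x => rfl)]
    rw [h0L]
    simp
  · have ncond : ∀ x : G, ¬ (mp.ltl (g * x⁻¹) (mp.rtr x f) = (mp.ltl x f)⁻¹) := by
      intro x hc
      apply hg
      have h3 := mp.mul_ltl (g * x⁻¹) x f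
      rw [inv_mul_cancel_right, hc, inv_mul_cancel] at h3
      exact (mp_ltl_eq_one_iff mp g f).mp h3
    rw [if_neg hg, zero_mul]
    exact Finset.sum_eq_zero fun x _ => by rw [if_neg (ncond x)]; ring

lemma conv_inv_2 (R : G → F → G → F → k)
    (h0L : ∀ (g : G) (f : F), ∑ x : G, R x 1 g f = if g = 1 then (1 : k) else 0)
    (h2 : ∀ (g h l : G) (f f' f'' : F),
      (if mp.ltl g f = h then (1 : k) else 0) * ((cd.sig g f f' : kˣ) : k)
          * R g (f * f') l f''
        = ∑ x : G, ((cd.tau (l * x⁻¹) x f'' : kˣ) : k)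
            * R g f (l * x⁻¹) (mp.rtr x f'') * R h f' x f'')
    (g h : G) (f f' : F) :
    ∑ x : G, ∑ y : G,
      ((cd.tau (g * x⁻¹) x f : kˣ) : k) * ((cd.tau (h * y⁻¹) y f' : kˣ) : k) *
        Rbar (cd := cd) R (g * x⁻¹) (mp.rtr x f) (h * y⁻¹) (mp.rtr y f') * R x f y f'
      = (if g = 1 then (1 : k) else 0) * (if h = 1 then (1 : k) else 0) := by
  have step : ∀ x : G, (∑ y : G,
      ((cd.tau (g * x⁻¹) x f : kˣ) : k) * ((cd.tau (h * y⁻¹) y f' : kˣ) : k) *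
        Rbar (cd := cd) R (g * x⁻¹) (mp.rtr x f) (h * y⁻¹) (mp.rtr y f') * R x f y f')
      = (((((cd.sig (g * x⁻¹)⁻¹ (mp.rtr (g * x⁻¹) (mp.rtr x f))
              (mp.rtr (g * x⁻¹) (mp.rtr x f))⁻¹)⁻¹
            * (cd.tau (g * x⁻¹)⁻¹ (g * x⁻¹) (mp.rtr x f))⁻¹ : kˣ)) : k)
          * ((cd.tau (g * x⁻¹) x f : kˣ) : k))
        * ((if mp.ltl (mp.ltl (g * x⁻¹) (mp.rtr x f))⁻¹
              (mp.rtr (g * x⁻¹) (mp.rtr x f))⁻¹ = x then (1 : k) else 0)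
            * ((cd.sig (mp.ltl (g * x⁻¹) (mp.rtr x f))⁻¹
                (mp.rtr (g * x⁻¹) (mp.rtr x f))⁻¹ f : kˣ) : k)
            * R (mp.ltl (g * x⁻¹) (mp.rtr x f))⁻¹
                ((mp.rtr (g * x⁻¹) (mp.rtr x f))⁻¹ * f) h f') := by
    intro x
    rw [show (∑ y : G,
        ((cd.tau (g * x⁻¹) x f : kˣ) : k) * ((cd.tau (h * y⁻¹) y f' : kˣ) : k) *
          Rbar (cd := cd) R (g * x⁻¹) (mp.rtr x f) (h * y⁻¹) (mp.rtr y f') * R x f y f')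
      = (((((cd.sig (g * x⁻¹)⁻¹ (mp.rtr (g * x⁻¹) (mp.rtr x f))
              (mp.rtr (g * x⁻¹) (mp.rtr x f))⁻¹)⁻¹
            * (cd.tau (g * x⁻¹)⁻¹ (g * x⁻¹) (mp.rtr x f))⁻¹ : kˣ)) : k)
          * ((cd.tau (g * x⁻¹) x f : kˣ) : k))
        * (∑ y : G, ((cd.tau (h * y⁻¹) y f' : kˣ) : k)
            * R (mp.ltl (g * x⁻¹) (mp.rtr x f))⁻¹ (mp.rtr (g * x⁻¹) (mp.rtr x f))⁻¹
                (h * y⁻¹) (mp.rtr y f')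
            * R x f y f') from by
      rw [Finset.mul_sum]
      exact Finset.sum_congr rfl fun y _ => by unfold Rbar; ring]
    rw [← h2 (mp.ltl (g * x⁻¹) (mp.rtr x f))⁻¹ x h
      (mp.rtr (g * x⁻¹) (mp.rtr x f))⁻¹ f f']
  rw [Finset.sum_congr rfl (fun x _ => step x)]
  by_cases hg : g = 1
  · subst hg
    simp only [one_mul, inv_inv]
    have term : ∀ x : G,
        (((((cd.sig x (mp.rtr x⁻¹ (mp.rtr x f)) (mp.rtr x⁻¹ (mp.rtr x f))⁻¹)⁻¹
              * (cd.tau x x⁻¹ (mp.rtr x f))⁻¹ : kˣ)) : k)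
            * ((cd.tau x⁻¹ x f : kˣ) : k))
          * ((if mp.ltl (mp.ltl x⁻¹ (mp.rtr x f))⁻¹
                (mp.rtr x⁻¹ (mp.rtr x f))⁻¹ = x then (1 : k) else 0)
              * ((cd.sig (mp.ltl x⁻¹ (mp.rtr x f))⁻¹
                  (mp.rtr x⁻¹ (mp.rtr x f))⁻¹ f : kˣ) : k)
              * R (mp.ltl x⁻¹ (mp.rtr x f))⁻¹
                  ((mp.rtr x⁻¹ (mp.rtr x f))⁻¹ * f) h f')
        = R (mp.ltl x f) 1 h f' := by
      intro x
      rw [mp_antipode mp x⁻¹ (mp.rtr x f), inv_inv, if_pos rfl]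
      rw [mp_rtr_rtr_inv mp x f, mp_ltl_inv_rtr mp x f, inv_inv, inv_mul_cancel]
      rw [sig_flip mp cd x f, tau_flip mp cd x f]
      rw [Units.val_mul, Units.val_inv_eq_inv_val, Units.val_inv_eq_inv_val]
      field_simp
    rw [Finset.sum_congr rfl (fun x _ => term x)]
    rw [Fintype.sum_equiv
      (⟨fun x => mp.ltl x f, fun z => mp.ltl z f⁻¹,
        fun x => mp_ltl_ltl_inv mp x f, fun z => mp_ltl_inv_ltl mp z f⟩ : G ≃ G)
      (fun x => R (mp.ltl x f) 1 h f') (fun z => R z 1 h f') (fun x => rfl)]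
    rw [h0L]
    simp
  · have ncond : ∀ x : G, ¬ (mp.ltl (mp.ltl (g * x⁻¹) (mp.rtr x f))⁻¹
        (mp.rtr (g * x⁻¹) (mp.rtr x f))⁻¹ = x) := by
      intro x hc
      rw [mp_antipode mp (g * x⁻¹) (mp.rtr x f)] at hc
      apply hg
      have h4 : g * x⁻¹ = x⁻¹ := by rw [← inv_inv (g * x⁻¹), hc]
      exact mul_eq_right.mp h4
    rw [if_neg hg, zero_mul]
    exact Finset.sum_eq_zero fun x _ => by rw [if_neg (ncond x)]; ring

lemma rhs_single_bridge (R : G → F → G → F → k) (g h l : G) (f f' : F) :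
    (Finsupp.single
        (mp.rtr (l⁻¹ * h) f'
          * mp.rtr ((mp.ltl (h * (l⁻¹ * h)⁻¹) (mp.rtr (l⁻¹ * h) f'))⁻¹ * g) f)
        (((cd.tau (g * ((mp.ltl (h * (l⁻¹ * h)⁻¹) (mp.rtr (l⁻¹ * h) f'))⁻¹ * g)⁻¹)
              ((mp.ltl (h * (l⁻¹ * h)⁻¹) (mp.rtr (l⁻¹ * h) f'))⁻¹ * g) f : kˣ) : k)
          * ((cd.tau (h * (l⁻¹ * h)⁻¹) (l⁻¹ * h) f' : kˣ) : k)
          * R ((mp.ltl (h * (l⁻¹ * h)⁻¹) (mp.rtr (l⁻¹ * h) f'))⁻¹ * g) f (l⁻¹ * h) f'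
          * ((cd.sig (h * (l⁻¹ * h)⁻¹) (mp.rtr (l⁻¹ * h) f')
              (mp.rtr ((mp.ltl (h * (l⁻¹ * h)⁻¹) (mp.rtr (l⁻¹ * h) f'))⁻¹ * g) f) : kˣ) : k))
        : F →₀ k)
      = Finsupp.single
          (mp.rtr (l⁻¹ * h) f'
            * mp.rtr (mp.ltl (l⁻¹ * h) f' * (mp.ltl h f')⁻¹ * g) f)
          (((cd.tau (mp.ltl h f' * (mp.ltl (l⁻¹ * h) f')⁻¹)
                (mp.ltl (l⁻¹ * h) f' * (mp.ltl h f')⁻¹ * g) f : kˣ) : k)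
            * ((cd.tau l (l⁻¹ * h) f' : kˣ) : k)
            * R (mp.ltl (l⁻¹ * h) f' * (mp.ltl h f')⁻¹ * g) f (l⁻¹ * h) f'
            * ((cd.sig l (mp.rtr (l⁻¹ * h) f')
                (mp.rtr (mp.ltl (l⁻¹ * h) f' * (mp.ltl h f')⁻¹ * g) f) : kˣ) : k)) := by
  have e1 : h * (l⁻¹ * h)⁻¹ = l := by group
  rw [e1]
  have e2 : mp.ltl l (mp.rtr (l⁻¹ * h) f') = mp.ltl h f' * (mp.ltl (l⁻¹ * h) f')⁻¹ := by
    have h0 := mp.mul_ltl l (l⁻¹ * h) f'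
    rw [show l * (l⁻¹ * h) = h from by group] at h0
    rw [h0, mul_inv_cancel_right]
  rw [e2]
  rw [show (mp.ltl h f' * (mp.ltl (l⁻¹ * h) f')⁻¹)⁻¹ * g
      = mp.ltl (l⁻¹ * h) f' * (mp.ltl h f')⁻¹ * g from by group]
  rw [show g * (mp.ltl (l⁻¹ * h) f' * (mp.ltl h f')⁻¹ * g)⁻¹
      = mp.ltl h f' * (mp.ltl (l⁻¹ * h) f')⁻¹ from by group]

end Conv

/-- `R` (given by its values `R g f h f' = R(p_g # f, p_h # f')` on the basis
`{p_g # f}` of `H = k^G τ#_σ kF`) is a coquasitriangular structure on `H`: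
it is convolution invertible, satisfies `R(a, bc) = Σ R(a₁, c) R(a₂, b)` and
`R(ab, c) = Σ R(a, c₁) R(b, c₂)`, and the quasi-commutativity axiom
`Σ R(a₁, b₁) a₂ b₂ = Σ b₁ a₁ R(a₂, b₂)`, all expressed on basis elements using
`Δ(p_g # f) = Σ_x τ(g x⁻¹, x; f) (p_{g x⁻¹} # (x ▷ f)) ⊗ (p_x # f)` and
`ε(p_g # f) = δ_{g,1}`. -/
structure IsCQT {k F G : Type*} [Field k] [Group F] [Group G] [Fintype G] [DecidableEq G]
    (mp : MatchedPair F G) (cd : CocycleData k F G mp)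
    (R : G → F → G → F → k) : Prop where
  conv_inv : ∃ R' : G → F → G → F → k,
    (∀ (g h : G) (f f' : F),
      ∑ x : G, ∑ y : G,
        ((cd.tau (g * x⁻¹) x f : kˣ) : k) * ((cd.tau (h * y⁻¹) y f' : kˣ) : k) *
          R (g * x⁻¹) (mp.rtr x f) (h * y⁻¹) (mp.rtr y f') * R' x f y f'
        = (if g = 1 then (1 : k) else 0) * (if h = 1 then (1 : k) else 0)) ∧
    (∀ (g h : G) (f f' : F),
      ∑ x : G, ∑ y : G,
        ((cd.tau (g * x⁻¹) x f : kˣ) : k) * ((cd.tau (h * y⁻¹) y f' : kˣ) : k) *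
          R' (g * x⁻¹) (mp.rtr x f) (h * y⁻¹) (mp.rtr y f') * R x f y f'
        = (if g = 1 then (1 : k) else 0) * (if h = 1 then (1 : k) else 0))
  cqt1 : ∀ (g h l : G) (f f' f'' : F),
    (if mp.ltl h f' = l then (1 : k) else 0) * ((cd.sig h f' f'' : kˣ) : k)
        * R g f h (f' * f'')
      = ∑ x : G, ((cd.tau (g * x⁻¹) x f : kˣ) : k)
          * R (g * x⁻¹) (mp.rtr x f) l f'' * R x f h f'
  cqt2 : ∀ (g h l : G) (f f' f'' : F),
    (if mp.ltl g f = h then (1 : k) else 0) * ((cd.sig g f f' : kˣ) : k)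
        * R g (f * f') l f''
      = ∑ x : G, ((cd.tau (l * x⁻¹) x f'' : kˣ) : k)
          * R g f (l * x⁻¹) (mp.rtr x f'') * R h f' x f''
  qcomm : ∀ (g h : G) (f f' : F),
    (∑ x : G, ∑ y : G,
      (((cd.tau (g * x⁻¹) x f : kˣ) : k) * ((cd.tau (h * y⁻¹) y f' : kˣ) : k) *
        R (g * x⁻¹) (mp.rtr x f) (h * y⁻¹) (mp.rtr y f')) • mulB mp cd (x, f) (y, f'))
      = ∑ x : G, ∑ y : G,
        (((cd.tau (g * x⁻¹) x f : kˣ) : k) * ((cd.tau (h * y⁻¹) y f' : kˣ) : k) *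
          R x f y f') • mulB mp cd (h * y⁻¹, mp.rtr y f') (g * x⁻¹, mp.rtr x f)

/-- Characterization of coquasitriangular structures on `H = k^G τ#_σ kF`: a bilinear
form `R` (given by its values on the basis `{p_g # f}`) is a coquasitriangular
structure if and only if conditions (CQT0)-(CQT3) hold, where (CQT3) is an identity in
the group algebra `kF` (realized as `F →₀ k`). -/
theorem isCQT_iff_CQT0123 {k F G : Type*} [Field k] [IsAlgClosed k] [CharZero k]
    [Group F] [Group G] [Fintype G] [DecidableEq G]
    (mp : MatchedPair F G) (cd : CocycleData k F G mp)
    (R : G → F → G → F → k) :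
    IsCQT mp cd R ↔
      ((∀ (g : G) (f : F), ∑ x : G, R x 1 g f = if g = 1 then (1 : k) else 0) ∧
       (∀ (g : G) (f : F), ∑ x : G, R g f x 1 = if g = 1 then (1 : k) else 0) ∧
       (∀ (g h l : G) (f f' f'' : F),
         (if mp.ltl h f' = l then (1 : k) else 0) * ((cd.sig h f' f'' : kˣ) : k)
             * R g f h (f' * f'')
           = ∑ x : G, ((cd.tau (g * x⁻¹) x f : kˣ) : k)
               * R (g * x⁻¹) (mp.rtr x f) l f'' * R x f h f') ∧
       (∀ (g h l : G) (f f' f'' : F),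
         (if mp.ltl g f = h then (1 : k) else 0) * ((cd.sig g f f' : kˣ) : k)
             * R g (f * f') l f''
           = ∑ x : G, ((cd.tau (l * x⁻¹) x f'' : kˣ) : k)
               * R g f (l * x⁻¹) (mp.rtr x f'') * R h f' x f'') ∧
       (∀ (g h l : G) (f f' : F),
         (Finsupp.single (f * f')
             (((cd.tau (g * l⁻¹) l f : kˣ) : k)
               * ((cd.tau (h * (mp.ltl l f)⁻¹) (mp.ltl l f) f' : kˣ) : k)
               * R (g * l⁻¹) (mp.rtr l f) (h * (mp.ltl l f)⁻¹)
                   (mp.rtr (mp.ltl l f) f')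
               * ((cd.sig l f f' : kˣ) : k)) : F →₀ k)
           = Finsupp.single
               (mp.rtr (l⁻¹ * h) f'
                 * mp.rtr (mp.ltl (l⁻¹ * h) f' * (mp.ltl h f')⁻¹ * g) f)
               (((cd.tau (mp.ltl h f' * (mp.ltl (l⁻¹ * h) f')⁻¹)
                     (mp.ltl (l⁻¹ * h) f' * (mp.ltl h f')⁻¹ * g) f : kˣ) : k)
                 * ((cd.tau l (l⁻¹ * h) f' : kˣ) : k)
                 * R (mp.ltl (l⁻¹ * h) f' * (mp.ltl h f')⁻¹ * g) f (l⁻¹ * h) f'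
                 * ((cd.sig l (mp.rtr (l⁻¹ * h) f')
                     (mp.rtr (mp.ltl (l⁻¹ * h) f' * (mp.ltl h f')⁻¹ * g) f) : kˣ) : k)))) := by
  constructor
  · rintro ⟨⟨R', hRR', hR'R⟩, h1, h2, hq⟩
    have hE1 : conv2 mp cd R R' = E2 :=
      funext fun g => funext fun f => funext fun h => funext fun f' => hRR' g h f f'
    have hE2 : conv2 mp cd R' R = E2 :=
      funext fun g => funext fun f => funext fun h => funext fun f' => hR'R g h f f'
    have hW : conv2 mp cd
        (fun g f h _ => (∑ l : G, R g f l 1) * (if h = 1 then (1 : k) else 0)) R = R :=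
      conv2_W_R R h1
    have hU : conv2 mp cd R
        (fun g _ h f' => (if g = 1 then (1 : k) else 0) * (∑ x : G, R x 1 h f')) = R :=
      conv2_R_U R h2
    have hWE : (fun g f h _ => (∑ l : G, R g f l 1) * (if h = 1 then (1 : k) else 0))
        = (E2 : G → F → G → F → k) := by
      calc (fun g f h _ => (∑ l : G, R g f l 1) * (if h = 1 then (1 : k) else 0))
          = conv2 mp cd
              (fun g f h _ => (∑ l : G, R g f l 1) * (if h = 1 then (1 : k) else 0))
              E2 := (conv2_E_right mp cd _).symm
        _ = conv2 mp cd
              (fun g f h _ => (∑ l : G, R g f l 1) * (if h = 1 then (1 : k) else 0))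
              (conv2 mp cd R R') := by rw [hE1]
        _ = conv2 mp cd (conv2 mp cd
              (fun g f h _ => (∑ l : G, R g f l 1) * (if h = 1 then (1 : k) else 0)) R)
              R' := (conv2_assoc mp cd _ _ _).symm
        _ = conv2 mp cd R R' := by rw [hW]
        _ = E2 := hE1
    have hUE : (fun g _ h f' => (if g = 1 then (1 : k) else 0) * (∑ x : G, R x 1 h f'))
        = (E2 : G → F → G → F → k) := by
      calc (fun g _ h f' => (if g = 1 then (1 : k) else 0) * (∑ x : G, R x 1 h f'))
          = conv2 mp cd E2
              (fun g _ h f' => (if g = 1 then (1 : k) else 0) * (∑ x : G, R x 1 h f'))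
            := (conv2_E_left mp cd _).symm
        _ = conv2 mp cd (conv2 mp cd R' R)
              (fun g _ h f' => (if g = 1 then (1 : k) else 0) * (∑ x : G, R x 1 h f'))
            := by rw [hE2]
        _ = conv2 mp cd R' (conv2 mp cd R
              (fun g _ h f' => (if g = 1 then (1 : k) else 0) * (∑ x : G, R x 1 h f')))
            := conv2_assoc mp cd _ _ _
        _ = conv2 mp cd R' R := by rw [hU]
        _ = E2 := hE2
    refine ⟨?_, ?_, h1, h2, ?_⟩
    · intro g0 f0
      have := congrFun (congrFun (congrFun (congrFun hUE 1) f0) g0) f0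
      simpa [E2] using this
    · intro g0 f0
      have := congrFun (congrFun (congrFun (congrFun hWE g0) f0) 1) f0
      simpa [E2] using this
    · intro g h l f f'
      ext w
      have hp := DFunLike.congr_fun (hq g h f f') (l, w)
      rw [qcomm_lhs_apply, qcomm_rhs_apply, rhs_single_bridge] at hp
      exact hp
  · rintro ⟨h0L, h0R, h1, h2, h3⟩
    refine ⟨⟨Rbar (cd := cd) R,
      fun g h f f' => conv_inv_1 R h0L h2 g h f f',
      fun g h f f' => conv_inv_2 R h0L h2 g h f f'⟩, h1, h2, ?_⟩
    intro g h f f'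
    ext ⟨l, w⟩
    rw [qcomm_lhs_apply, qcomm_rhs_apply, rhs_single_bridge]
    exact DFunLike.congr_fun (h3 g h l f f') w
end

section
/- Let G be a finite group, F a group, (F, G, ◁, ▷) a matched pair, σ, τ cocycle data, and let (k^G τ#_σ kF, R) be a coquasitriangular Hopf algebra. If g, h ∈ G and f ∈ F with g ∉ G_f (i.e. g ▷ f ≠ f), then R(p_g # (g⁻¹ ▷ f), p_h # 1) = R(p_g # f, p_h # 1) = 0 and R(p_h # 1, p_g # f) = R(p_h # 1, p_g # (g⁻¹ ▷ f)) = 0. -/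
section Aux
variable {k F G : Type*} [Field k] [Group F] [Group G]

lemma MatchedPair.rtr_one' (mp : MatchedPair F G) (x : G) : mp.rtr x 1 = 1 := by
  have h := mp.rtr_mul x 1 1
  rw [mp.ltl_one, mul_one] at h
  exact (left_eq_mul.mp h)

lemma MatchedPair.one_ltl' (mp : MatchedPair F G) (f : F) : mp.ltl 1 f = 1 := by
  have h := mp.mul_ltl 1 1 f
  rw [one_mul, mp.one_rtr] at h
  exact (left_eq_mul.mp h)

end Aux

lemma key1 {k F G : Type*} [Field k] [Group F] [Group G] [Fintype G] [DecidableEq G]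
    (mp : MatchedPair F G) (cd : CocycleData k F G mp)
    (R : G → F → G → F → k) (hR : IsCQT mp cd R)
    (g h : G) (f : F) (hg : mp.rtr g f ≠ f) : R g f h 1 = 0 := by
  classical
  have h0 := DFunLike.congr_fun (hR.qcomm g h f 1) (1, f)
  simp only [mulB, Finsupp.coe_finset_sum, Finset.sum_apply, Finsupp.smul_apply,
    mp.rtr_one', mp.one_ltl', mp.ltl_one, cd.sig_one_right, cd.sig_one_left,
    cd.tau_one_right, mul_one, one_mul, Units.val_one, apply_ite (fun φ : (G × F) →₀ k => φ (1, f)),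
    Finsupp.single_apply, Finsupp.coe_zero, Pi.zero_apply, Prod.mk.injEq,
    smul_ite, smul_zero, smul_eq_mul] at h0
  simp only [Finsupp.single_apply, Prod.mk.injEq, ite_and, mul_ite, mul_one, mul_zero] at h0
  simp only [Finset.sum_ite_eq, Finset.mem_univ, if_true, mp.one_ltl', inv_one, mul_one,
    cd.tau_one, mp.one_rtr, Units.val_one, one_mul] at h0
  rw [Finset.sum_ite_eq' Finset.univ (1:G)] at h0
  simp only [Finset.mem_univ, if_true, inv_one, mul_one, cd.tau_one, mp.one_rtr, mp.one_ltl',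
    Units.val_one, one_mul] at h0
  rw [h0]
  refine Finset.sum_eq_zero fun x _ => Finset.sum_eq_zero fun y _ => ?_
  split_ifs with h1 h2 h3
  · have hx : g = x := mul_inv_eq_one.mp (h1.symm.trans h2)
    exact absurd (hx ▸ h3) hg
  all_goals rfl


lemma key2 {k F G : Type*} [Field k] [Group F] [Group G] [Fintype G] [DecidableEq G]
    (mp : MatchedPair F G) (cd : CocycleData k F G mp)
    (R : G → F → G → F → k) (hR : IsCQT mp cd R)
    (g h : G) (f : F) (hg : mp.rtr g f ≠ f) : R h 1 g f = 0 := by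
  classical
  have h0 := DFunLike.congr_fun (hR.qcomm h g 1 f) (1, f)
  simp only [mulB, Finsupp.coe_finset_sum, Finset.sum_apply, Finsupp.smul_apply,
    mp.rtr_one', mp.one_ltl', mp.ltl_one, cd.sig_one_right, cd.sig_one_left,
    cd.tau_one_right, mul_one, one_mul, Units.val_one, apply_ite (fun φ : (G × F) →₀ k => φ (1, f)),
    Finsupp.single_apply, Finsupp.coe_zero, Pi.zero_apply, Prod.mk.injEq,
    smul_ite, smul_zero, smul_eq_mul] at h0
  simp only [and_true, mul_ite, mul_one, mul_zero] at h0
  rw [Finset.sum_congr rfl (fun x _ => Finset.sum_ite_eq Finset.univ x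
    (fun x_1 => if x = 1 then ((cd.tau (g * x_1⁻¹) x_1 f : kˣ) : k) * R (h * x⁻¹) 1 (g * x_1⁻¹) (mp.rtr x_1 f) else 0))] at h0
  simp only [Finset.mem_univ, if_true] at h0
  rw [Finset.sum_ite_eq' Finset.univ (1:G)] at h0
  simp only [Finset.mem_univ, if_true, inv_one, mul_one, cd.tau_one, mp.one_rtr,
    Units.val_one, one_mul] at h0
  rw [h0]
  refine Finset.sum_eq_zero fun x _ => Finset.sum_eq_zero fun y _ => ?_
  split_ifs with h1 h2
  · exact absurd (mul_inv_eq_one.mp h2.1 ▸ h2.2) hg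
  all_goals rfl

/-- Let `(k^G τ#_σ kF, R)` be coquasitriangular and `g ∉ G_f` (i.e. `g ▷ f ≠ f`). Then
`R(p_g # (g⁻¹ ▷ f), p_h # 1) = R(p_g # f, p_h # 1) = 0` and
`R(p_h # 1, p_g # f) = R(p_h # 1, p_g # (g⁻¹ ▷ f)) = 0`. -/
theorem R_eq_zero_of_not_mem_stabilizer {k F G : Type*} [Field k] [IsAlgClosed k]
    [CharZero k] [Group F] [Group G] [Fintype G] [DecidableEq G]
    (mp : MatchedPair F G) (cd : CocycleData k F G mp)
    (R : G → F → G → F → k) (hR : IsCQT mp cd R)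
    (g h : G) (f : F) (hg : mp.rtr g f ≠ f) :
    R g (mp.rtr g⁻¹ f) h 1 = 0 ∧ R g f h 1 = 0 ∧
      R h 1 g f = 0 ∧ R h 1 g (mp.rtr g⁻¹ f) = 0 := by
  have hg2 : mp.rtr g (mp.rtr g⁻¹ f) ≠ mp.rtr g⁻¹ f := by
    intro hc
    have h1 : mp.rtr g (mp.rtr g⁻¹ f) = f := by
      rw [← mp.mul_rtr, mul_inv_cancel, mp.one_rtr]
    have h2 : mp.rtr g⁻¹ f = f := hc.symm.trans h1
    apply hg
    calc mp.rtr g f = mp.rtr g (mp.rtr g⁻¹ f) := by rw [h2]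
      _ = f := h1
  exact ⟨key1 mp cd R hR g h _ hg2, key1 mp cd R hR g h f hg,
    key2 mp cd R hR g h f hg, key2 mp cd R hR g h _ hg2⟩
end
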